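/- Let n ≥ 1 and let π, σ be permutations of {1,…,n}. Then the following are equivalent: (i) every cycle (orbit) of π is contained in a cycle of σ, and for every cycle C of σ the number of cycles of π contained in C plus the number of cycles of π⁻¹σ contained in C equals |C| + 1 (i.e., π ≤ σ in the non-crossing order on permutations); (ii) #(π) + #(π⁻¹σ) = n + #(σ) (equivalently, writing |α| := n − #(α), the equality |π| + |π⁻¹σ| = |σ| holds). -/

import Mathlib

set_option linter.unusedSectionVars false
set_option maxHeartbeats 1000000


noncomputable def cycleCount {N : ℕ} (π : Equiv.Perm (Fin N)) : ℕ :=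
  Set.ncard {O : Set (Fin N) | ∃ x, O = {y | π.SameCycle x y}}

noncomputable def cyclesIn {N : ℕ} (π : Equiv.Perm (Fin N)) (C : Set (Fin N)) : ℕ :=
  Set.ncard {O : Set (Fin N) | (∃ x, O = {y | π.SameCycle x y}) ∧ O ⊆ C}

/-- The annular permutation `γ_{p,q}` of `{1,…,p+q}` (0-indexed as `Fin (p+q)`),
with the two cycles `(1,…,p)` and `(p+1,…,p+q)`. -/
def annularGamma (p q : ℕ) : Equiv.Perm (Fin (p + q)) :=
  finSumFinEquiv.permCongr ((finRotate p).sumCongr (finRotate q))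

/-- The interval involution `I_N = (1 2)(3 4)⋯(N-1 N)` of `{1,…,N}`
(0-indexed: swaps `2i ↔ 2i+1`), for `N` even. -/
def intervalInvolution (N : ℕ) : Equiv.Perm (Fin N) :=
  Function.Involutive.toPerm
    (fun x => ⟨if x.val % 2 = 0 then min (x.val + 1) (N - 1) else x.val - 1, by
      rcases x with ⟨v, hv⟩
      dsimp only
      split <;> omega⟩)
    (by
      intro x
      rcases x with ⟨v, hv⟩
      apply Fin.ext
      dsimp only
      split_ifs <;> omega)

/-- The subgroup generated by `π` and `ρ` acts transitively on `Fin N`. -/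
def JointTrans {N : ℕ} (π ρ : Equiv.Perm (Fin N)) : Prop :=
  ∀ x y : Fin N, ∃ g ∈ Subgroup.closure ({π, ρ} : Set (Equiv.Perm (Fin N))), g x = y

/-- `α` separates even numbers: no cycle of `α` contains two distinct even numbers
(an element `x : Fin N` represents the number `x.val + 1`). -/
def SeparatesEven {N : ℕ} (α : Equiv.Perm (Fin N)) : Prop :=
  ∀ x y : Fin N, α.SameCycle x y → (x.val + 1) % 2 = 0 → (y.val + 1) % 2 = 0 → x = y

/-- `π ∈ S_NC(p,q)`: annular non-crossing permutations. -/
def AnnularNC (p q : ℕ) (π : Equiv.Perm (Fin (p + q))) : Prop :=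
  JointTrans π (annularGamma p q) ∧
    cycleCount π + cycleCount (π⁻¹ * annularGamma p q) = p + q

/-- `A` witnesses bipartiteness of the graph `G_π`: `π(A) = A` and for each `i`,
exactly one of the (1-indexed) numbers `2i-1`, `2i` belongs to `A`. -/
def BipartSet {N : ℕ} (π : Equiv.Perm (Fin N)) (A : Set (Fin N)) : Prop :=
  (⇑π) '' A = A ∧ ∀ i : ℕ, ∀ h : 2 * i + 1 < N,
    Xor' ((⟨2 * i, Nat.lt_of_succ_lt h⟩ : Fin N) ∈ A) ((⟨2 * i + 1, h⟩ : Fin N) ∈ A)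

/-- The graph `G_π` is bipartite. -/
def GraphBipartite {N : ℕ} (π : Equiv.Perm (Fin N)) : Prop :=
  ∃ A : Set (Fin N), BipartSet π A

/-- `π ∈ J_{2n,2m}`: annular non-crossing, bipartite graph, and `π⁻¹γ` separates even. -/
def memJ (n m : ℕ) (π : Equiv.Perm (Fin (2 * n + 2 * m))) : Prop :=
  AnnularNC (2 * n) (2 * m) π ∧ GraphBipartite π ∧
    SeparatesEven (π⁻¹ * annularGamma (2 * n) (2 * m))

namespace NCP
open Equiv Equiv.Perm
section Basic
variable {G : Type*}

def orb (α : Perm G) (x : G) : Set G := {y | α.SameCycle x y}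

lemma mem_orb {α : Perm G} {x y : G} : y ∈ orb α x ↔ α.SameCycle x y := Iff.rfl

lemma self_mem_orb (α : Perm G) (x : G) : x ∈ orb α x := SameCycle.refl α x

lemma orb_eq_iff {α : Perm G} {x y : G} : orb α x = orb α y ↔ α.SameCycle x y := by
  constructor
  · intro h
    have hy : y ∈ orb α x := h ▸ self_mem_orb α y
    exact hy
  · intro h; ext z
    exact ⟨fun hz => h.symm.trans hz, fun hz => h.trans hz⟩

def cyc (α : Perm G) : Set (Set G) := Set.range (orb α)

noncomputable def cc (α : Perm G) : ℕ := (cyc α).ncard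

lemma orb_mem_cyc (α : Perm G) (x : G) : orb α x ∈ cyc α := ⟨x, rfl⟩

/-- SameCycle is contained in any equivalence relation containing the graph of α. -/
lemma sameCycle_closure {α : Perm G} {r : G → G → Prop}
    (hsymm : ∀ {x y}, r x y → r y x)
    (htrans : ∀ {x y z}, r x y → r y z → r x z)
    (hrefl : ∀ x, r x x)
    (hgen : ∀ x, r x (α x)) {x y : G} (h : α.SameCycle x y) : r x y := by
  obtain ⟨i, hi⟩ := h
  have key : ∀ (k : ℕ) (z : G), r z ((α ^ k) z) := by
    intro k
    induction k with
    | zero => intro z; simpa using hrefl z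
    | succ k ih =>
      intro z
      have h2 : (α ^ (k + 1)) z = (α ^ k) (α z) := by
        rw [pow_succ]; rfl
      rw [h2]
      exact htrans (hgen z) (ih (α z))
  obtain ⟨k, rfl | rfl⟩ := Int.eq_nat_or_neg i
  · have : (α ^ k) x = y := by rw [← zpow_natCast]; exact hi
    exact this ▸ key k x
  · have hx : (α ^ k) y = x := by
      rw [← hi]
      have : (α ^ (k : ℤ)) ((α ^ (-(k:ℤ))) x) = (α ^ ((k:ℤ) + -(k:ℤ))) x := by
        rw [zpow_add]; rfl
      rw [← zpow_natCast α k, this]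
      simp
    exact hsymm (hx ▸ key k y)

lemma sameCycle_mem_iff {α : Perm G} {C : Set G} (hC : ∀ y, y ∈ C ↔ α y ∈ C)
    {x y : G} (h : α.SameCycle x y) : x ∈ C ↔ y ∈ C :=
  sameCycle_closure (r := fun x y => (x ∈ C ↔ y ∈ C)) (fun h => h.symm)
    (fun h1 h2 => h1.trans h2) (fun _ => Iff.rfl) hC h

lemma orb_subset_of_invariant {α : Perm G} {C : Set G} (hC : ∀ y, y ∈ C ↔ α y ∈ C)
    {x : G} (hx : x ∈ C) : orb α x ⊆ C :=
  fun _ hy => (sameCycle_mem_iff hC hy).1 hx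

end Basic
section Main
variable {G : Type*} [Fintype G] [DecidableEq G]


lemma follow {α : Perm G} {a b x : G} :
    ∀ (m : ℕ), (∀ j, 0 < j → j ≤ m → (α ^ j) x ≠ a ∧ (α ^ j) x ≠ b) →
      ((Equiv.swap a b * α) ^ m) x = (α ^ m) x := by
  intro m
  induction m with
  | zero => simp
  | succ m ih =>
    intro h
    have h1 := ih (fun j hj hjm => h j hj (le_trans hjm (Nat.le_succ m)))
    have h2 : ((Equiv.swap a b * α) ^ (m + 1)) x
        = (Equiv.swap a b * α) (((Equiv.swap a b * α) ^ m) x) := by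
      rw [pow_succ']; rfl
    have h3 : (α ^ (m + 1)) x = α ((α ^ m) x) := by rw [pow_succ']; rfl
    have h4 := h (m + 1) (Nat.succ_pos m) le_rfl
    rw [h2, h1, mul_apply, ← h3]
    exact Equiv.swap_apply_of_ne_of_ne h4.1 h4.2

lemma beta_same_b_a {α : Perm G} {a b : G} (hab : a ≠ b) (h : ¬ α.SameCycle a b) :
    (Equiv.swap a b * α).SameCycle b a := by
  haveI : DecidablePred (fun k : ℕ => 0 < k ∧ (α ^ k) b = b) :=
    fun _ => Classical.propDecidable _
  have hex : ∃ k, 0 < k ∧ (α ^ k) b = b :=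
    ⟨orderOf α, orderOf_pos α, by rw [pow_orderOf_eq_one]; rfl⟩
  set m := Nat.find hex with hmdef
  obtain ⟨hm0, hmb⟩ := Nat.find_spec hex
  have havoid : ∀ j, 0 < j → j ≤ m - 1 → (α ^ j) b ≠ a ∧ (α ^ j) b ≠ b := by
    intro j hj hjm
    constructor
    · intro hja
      exact h (SameCycle.symm ⟨(j : ℤ), by rw [zpow_natCast]; exact hja⟩)
    · intro hjb
      have := Nat.find_le (h := hex) (⟨hj, hjb⟩ : 0 < j ∧ (α ^ j) b = b)
      omega
  have hfollow := follow (m - 1) havoid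
  have hkey : ((Equiv.swap a b * α) ^ m) b = a := by
    have hm1 : m = (m - 1) + 1 := by omega
    have hstep : α ((α ^ (m - 1)) b) = b := by
      rw [← Equiv.Perm.mul_apply, ← pow_succ', ← hm1]
      exact hmb
    rw [hm1, pow_succ', mul_apply, hfollow, mul_apply, hstep]
    exact Equiv.swap_apply_right a b
  exact ⟨(m : ℤ), by rw [zpow_natCast]; exact hkey⟩

lemma merge_coarsen {α : Perm G} {a b : G} (hab : a ≠ b) (h : ¬ α.SameCycle a b) :
    ∀ x y, α.SameCycle x y → (Equiv.swap a b * α).SameCycle x y := by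
  intro x y hxy
  refine sameCycle_closure (fun h => h.symm) (fun h1 h2 => h1.trans h2)
    (fun z => SameCycle.refl _ z) ?_ hxy
  intro z
  by_cases h1 : α z = a
  · have hz : (Equiv.swap a b * α) z = b := by
      rw [mul_apply, h1, Equiv.swap_apply_left]
    have hzb : (Equiv.swap a b * α).SameCycle z b := ⟨1, by simpa using hz⟩
    rw [h1]
    exact hzb.trans (beta_same_b_a hab h)
  · by_cases h2 : α z = b
    · have hz : (Equiv.swap a b * α) z = a := by
        rw [mul_apply, h2, Equiv.swap_apply_right]
      have hza : (Equiv.swap a b * α).SameCycle z a := ⟨1, by simpa using hz⟩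
      rw [h2]
      exact hza.trans (beta_same_b_a hab h).symm
    · have hz : (Equiv.swap a b * α) z = α z := by
        rw [mul_apply]
        exact Equiv.swap_apply_of_ne_of_ne h1 h2
      exact ⟨1, by simpa using hz⟩

lemma merge_bound {α : Perm G} {a b : G} (hab : a ≠ b) (h : ¬ α.SameCycle a b) :
    ∀ x y, (Equiv.swap a b * α).SameCycle x y →
      α.SameCycle x y ∨ (α.SameCycle a x ∧ α.SameCycle b y) ∨
        (α.SameCycle b x ∧ α.SameCycle a y) := by
  intro x y hxy
  refine sameCycle_closure
    (r := fun x y => α.SameCycle x y ∨ (α.SameCycle a x ∧ α.SameCycle b y) ∨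
      (α.SameCycle b x ∧ α.SameCycle a y)) ?_ ?_ ?_ ?_ hxy
  · rintro u v (huv | ⟨hau, hbv⟩ | ⟨hbu, hav⟩)
    · exact Or.inl huv.symm
    · exact Or.inr (Or.inr ⟨hbv, hau⟩)
    · exact Or.inr (Or.inl ⟨hav, hbu⟩)
  · rintro u v w (huv | ⟨hau, hbv⟩ | ⟨hbu, hav⟩) (hvw | ⟨hav', hbw⟩ | ⟨hbv', haw⟩)
    · exact Or.inl (huv.trans hvw)
    · exact Or.inr (Or.inl ⟨hav'.trans huv.symm, hbw⟩)
    · exact Or.inr (Or.inr ⟨hbv'.trans huv.symm, haw⟩)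
    · exact Or.inr (Or.inl ⟨hau, hbv.trans hvw⟩)
    · exact absurd (hav'.trans hbv.symm) h
    · exact Or.inl (hau.symm.trans haw)
    · exact Or.inr (Or.inr ⟨hbu, hav.trans hvw⟩)
    · exact Or.inl (hbu.symm.trans hbw)
    · exact absurd (hav.trans hbv'.symm) h
  · intro z; exact Or.inl (SameCycle.refl _ z)
  · intro z
    by_cases h1 : α z = a
    · have hz : (Equiv.swap a b * α) z = b := by
        rw [mul_apply, h1, Equiv.swap_apply_left]
      rw [hz]
      have hza : α.SameCycle z a := ⟨1, by simpa using h1⟩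
      exact Or.inr (Or.inl ⟨hza.symm, SameCycle.refl _ b⟩)
    · by_cases h2 : α z = b
      · have hz : (Equiv.swap a b * α) z = a := by
          rw [mul_apply, h2, Equiv.swap_apply_right]
        rw [hz]
        have hzb : α.SameCycle z b := ⟨1, by simpa using h2⟩
        exact Or.inr (Or.inr ⟨hzb.symm, SameCycle.refl _ a⟩)
      · have hz : (Equiv.swap a b * α) z = α z := by
          rw [mul_apply]
          exact Equiv.swap_apply_of_ne_of_ne h1 h2
        rw [hz]
        exact Or.inl ⟨1, by simp⟩


lemma orb_beta_a {α : Perm G} {a b : G} (hab : a ≠ b) (h : ¬ α.SameCycle a b) :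
    orb (Equiv.swap a b * α) a = orb α a ∪ orb α b := by
  ext y
  constructor
  · intro hy
    rcases merge_bound hab h a y hy with h1 | ⟨h1, h2⟩ | ⟨h1, h2⟩
    · exact Or.inl h1
    · exact Or.inr h2
    · exact absurd h1.symm h
  · rintro (hy | hy)
    · exact merge_coarsen hab h a y hy
    · exact ((beta_same_b_a hab h).symm).trans (merge_coarsen hab h b y hy)

lemma orb_beta_other {α : Perm G} {a b x : G} (hab : a ≠ b) (h : ¬ α.SameCycle a b)
    (hxa : ¬ α.SameCycle a x) (hxb : ¬ α.SameCycle b x) :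
    orb (Equiv.swap a b * α) x = orb α x := by
  ext y
  constructor
  · intro hy
    rcases merge_bound hab h x y hy with h1 | ⟨h1, _⟩ | ⟨h1, _⟩
    · exact h1
    · exact absurd h1 hxa
    · exact absurd h1 hxb
  · exact fun hy => merge_coarsen hab h x y hy

lemma cyc_beta {α : Perm G} {a b : G} (hab : a ≠ b) (h : ¬ α.SameCycle a b) :
    cyc (Equiv.swap a b * α) =
      insert (orb α a ∪ orb α b) (cyc α \ {orb α a, orb α b}) := by
  ext O
  constructor
  · rintro ⟨x, rfl⟩
    by_cases hxa : α.SameCycle a x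
    · have : (Equiv.swap a b * α).SameCycle x a := (merge_coarsen hab h a x hxa).symm
      rw [orb_eq_iff.2 this, orb_beta_a hab h]
      exact Set.mem_insert _ _
    · by_cases hxb : α.SameCycle b x
      · have : (Equiv.swap a b * α).SameCycle x a :=
          ((merge_coarsen hab h b x hxb).symm).trans (beta_same_b_a hab h)
        rw [orb_eq_iff.2 this, orb_beta_a hab h]
        exact Set.mem_insert _ _
      · rw [orb_beta_other hab h hxa hxb]
        refine Set.mem_insert_of_mem _ ⟨orb_mem_cyc α x, ?_⟩
        simp only [Set.mem_insert_iff, Set.mem_singleton_iff]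
        push_neg
        constructor
        · intro he; exact hxa (orb_eq_iff.1 he).symm
        · intro he; exact hxb (orb_eq_iff.1 he).symm
  · rintro (rfl | ⟨⟨x, rfl⟩, hO⟩)
    · exact ⟨a, orb_beta_a hab h⟩
    · simp only [Set.mem_insert_iff, Set.mem_singleton_iff] at hO
      push_neg at hO
      have hxa : ¬ α.SameCycle a x := fun hc => hO.1 (orb_eq_iff.2 hc.symm)
      have hxb : ¬ α.SameCycle b x := fun hc => hO.2 (orb_eq_iff.2 hc.symm)
      exact ⟨x, orb_beta_other hab h hxa hxb⟩

lemma cyc_finite (α : Perm G) : (cyc α).Finite := Set.toFinite _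

lemma ncard_eq_card_toFinset {A : Type*} (s : Set A) (hs : s.Finite) :
    s.ncard = hs.toFinset.card := by
  rw [← Set.ncard_coe_finset, Set.Finite.coe_toFinset]

lemma cc_merge {α : Perm G} {a b : G} (hab : a ≠ b) (h : ¬ α.SameCycle a b) :
    cc α = cc (Equiv.swap a b * α) + 1 := by
  have hA : orb α a ∈ cyc α := orb_mem_cyc α a
  have hB : orb α b ∈ cyc α := orb_mem_cyc α b
  have hAB : orb α a ≠ orb α b := fun he => h (orb_eq_iff.1 he)
  have hpair : ({orb α a, orb α b} : Set (Set G)) ⊆ cyc α := by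
    rintro O (rfl | rfl)
    · exact hA
    · exact hB
  have hU : (orb α a ∪ orb α b) ∉ cyc α \ {orb α a, orb α b} := by
    rintro ⟨⟨x, hx⟩, -⟩
    have ha : a ∈ orb α x := hx ▸ Set.mem_union_left _ (self_mem_orb α a)
    have hb : b ∈ orb α x := hx ▸ Set.mem_union_right _ (self_mem_orb α b)
    exact h ((mem_orb.1 ha).symm.trans (mem_orb.1 hb))
  have h2le : 2 ≤ cc α := by
    have := Set.ncard_le_ncard hpair (cyc_finite α)
    rwa [Set.ncard_pair hAB] at this
  have hb : cc (Equiv.swap a b * α) = (cyc α \ {orb α a, orb α b}).ncard + 1 := by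
    rw [cc, cyc_beta hab h, Set.ncard_insert_of_notMem hU (Set.toFinite _)]
  rw [hb, Set.ncard_diff hpair (Set.toFinite _), Set.ncard_pair hAB]
  show cc α = cc α - 2 + 1 + 1
  omega

lemma not_sameCycle_beta {α : Perm G} {a b : G} (hab : a ≠ b) (h : α.SameCycle a b) :
    ¬ (Equiv.swap a b * α).SameCycle a b := by
  haveI : DecidablePred (fun k : ℕ => 0 < k ∧ (α ^ k) b = a) :=
    fun _ => Classical.propDecidable _
  have hex : ∃ k, 0 < k ∧ (α ^ k) b = a := by
    obtain ⟨i, hi0, _, hi⟩ := (h.symm).exists_pow_eq α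
    exact ⟨i, hi0, hi⟩
  set m := Nat.find hex with hmdef
  obtain ⟨hm0, hma⟩ := Nat.find_spec hex
  have havoid : ∀ j, 0 < j → j ≤ m - 1 → (α ^ j) b ≠ a ∧ (α ^ j) b ≠ b := by
    intro j hj hjm
    constructor
    · intro hja
      have := Nat.find_le (h := hex) ⟨hj, hja⟩
      omega
    · intro hjb
      have hsub : (α ^ (m - j)) b = a := by
        have hmj : m - j + j = m := by omega
        calc (α ^ (m - j)) b = (α ^ (m - j)) ((α ^ j) b) := by rw [hjb]
          _ = (α ^ (m - j + j)) b := by rw [pow_add]; rfl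
          _ = a := by rw [hmj]; exact hma
      have := Nat.find_le (h := hex) ⟨by omega, hsub⟩
      omega
  have hfollow := follow (m - 1) havoid
  set β := Equiv.swap a b * α with hβ
  have hperiod : (β ^ m) b = b := by
    have hm1 : m = (m - 1) + 1 := by omega
    have hstep : α ((α ^ (m - 1)) b) = a := by
      rw [← Equiv.Perm.mul_apply, ← pow_succ', ← hm1]
      exact hma
    rw [hm1, pow_succ', mul_apply, hfollow, mul_apply, hstep]
    exact Equiv.swap_apply_left a b
  have hnota : ∀ k, k < m → (β ^ k) b ≠ a := by
    intro k hk
    rcases Nat.eq_zero_or_pos k with rfl | hk0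
    · simpa using (Ne.symm hab)
    · have hfk := follow (α := α) (a := a) (b := b) (x := b) k
        (fun j hj hjm => havoid j hj (by omega))
      rw [hβ, hfk]
      exact (havoid k hk0 (by omega)).1
  intro hc
  obtain ⟨i, hi⟩ := hc.symm
  have hr0 : (0:ℤ) ≤ i % (m : ℤ) := Int.emod_nonneg i (by omega)
  have hrlt : i % (m : ℤ) < (m : ℤ) := Int.emod_lt_of_pos i (by exact_mod_cast hm0)
  set r := (i % (m : ℤ)).toNat with hr
  have hper : ((β ^ (m : ℤ)) ^ (i / (m : ℤ))) b = b :=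
    Equiv.Perm.zpow_apply_eq_self_of_apply_eq_self
      (by rw [zpow_natCast]; exact hperiod) _
  have hzi : β ^ i = β ^ (i % (m : ℤ)) * (β ^ (m : ℤ)) ^ (i / (m : ℤ)) := by
    rw [← zpow_mul, ← zpow_add, Int.emod_add_mul_ediv]
  have : (β ^ r) b = a := by
    have : (β ^ (i % (m : ℤ))) b = a := by
      rw [← hi, hzi, mul_apply, hper]
    rw [← this, ← zpow_natCast, hr, Int.toNat_of_nonneg hr0]
  exact hnota r (by omega) this

lemma cc_split {α : Perm G} {a b : G} (hab : a ≠ b) (h : α.SameCycle a b) :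
    cc (Equiv.swap a b * α) = cc α + 1 := by
  have h2 : ¬ (Equiv.swap a b * α).SameCycle a b := not_sameCycle_beta hab h
  have h3 : Equiv.swap a b * (Equiv.swap a b * α) = α := by
    rw [← mul_assoc, Equiv.swap_mul_self, one_mul]
  have := cc_merge (α := Equiv.swap a b * α) hab h2
  rw [h3] at this
  omega

lemma cyc_inv (α : Perm G) : cyc α⁻¹ = cyc α := by
  have : orb α⁻¹ = orb α := by
    funext x; ext y; exact sameCycle_inv
  rw [cyc, this, cyc]

lemma cc_inv (α : Perm G) : cc α⁻¹ = cc α := by rw [cc, cyc_inv, cc]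

lemma cc_mul_swap_merge {α : Perm G} {a b : G} (hab : a ≠ b) (h : ¬ α.SameCycle a b) :
    cc α = cc (α * Equiv.swap a b) + 1 ∧
      ∀ x y, α.SameCycle x y → (α * Equiv.swap a b).SameCycle x y := by
  have hinv : ¬ α⁻¹.SameCycle a b := fun hc => h (sameCycle_inv.1 hc)
  have hkey : (α * Equiv.swap a b)⁻¹ = Equiv.swap a b * α⁻¹ := by
    rw [mul_inv_rev, Equiv.swap_inv]
  constructor
  · have := cc_merge hab hinv
    rw [← hkey, cc_inv, cc_inv] at this
    exact this
  · intro x y hxy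
    have h1 : α⁻¹.SameCycle x y := sameCycle_inv.2 hxy
    have h2 := merge_coarsen hab hinv x y h1
    rw [← hkey] at h2
    exact sameCycle_inv.1 h2

lemma cc_mul_swap_split {α : Perm G} {a b : G} (hab : a ≠ b) (h : α.SameCycle a b) :
    cc (α * Equiv.swap a b) = cc α + 1 := by
  have hinv : α⁻¹.SameCycle a b := sameCycle_inv.2 h
  have hkey : (α * Equiv.swap a b)⁻¹ = Equiv.swap a b * α⁻¹ := by
    rw [mul_inv_rev, Equiv.swap_inv]
  have := cc_split hab hinv
  rw [← hkey, cc_inv, cc_inv] at this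
  exact this

lemma cc_le_card (α : Perm G) : cc α ≤ Fintype.card G := by
  have h1 : cyc α = orb α '' Set.univ := by rw [Set.image_univ, cyc]
  rw [cc, h1]
  calc (orb α '' Set.univ).ncard ≤ (Set.univ : Set G).ncard :=
        Set.ncard_image_le Set.finite_univ
    _ = Fintype.card G := by rw [Set.ncard_univ, Nat.card_eq_fintype_card]

lemma cc_one : cc (1 : Perm G) = Fintype.card G := by
  have h1 : orb (1 : Perm G) = fun x => {x} := by
    funext x; ext y
    rw [mem_orb, sameCycle_one]
    simp [eq_comm]
  rw [cc, cyc, h1, ← Set.image_univ,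
    Set.ncard_image_of_injective _ (fun x y h => Set.singleton_injective h),
    Set.ncard_univ, Nat.card_eq_fintype_card]

lemma triangle_strong : ∀ (k : ℕ) (γ α : Perm G), Fintype.card G - cc γ = k →
    cc α + cc γ ≤ Fintype.card G + cc (α * γ) ∧
      (cc α + cc γ = Fintype.card G + cc (α * γ) →
        ∀ x y, α.SameCycle x y → (α * γ).SameCycle x y) := by
  intro k
  induction k using Nat.strong_induction_on with
  | _ k ih =>
  intro γ α hk
  by_cases hγ : γ = 1
  · subst hγ
    rw [mul_one, cc_one]
    exact ⟨by omega, fun _ x y hxy => hxy⟩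
  · have hx : ∃ x, γ x ≠ x := by
      by_contra hc
      push_neg at hc
      exact hγ (Equiv.ext hc)
    obtain ⟨x, hx⟩ := hx
    have hxne : x ≠ γ x := fun he => hx he.symm
    have hsc : γ.SameCycle x (γ x) := ⟨1, by simp⟩
    have hccγ' : cc (Equiv.swap x (γ x) * γ) = cc γ + 1 := cc_split hxne hsc
    have hγeq : Equiv.swap x (γ x) * (Equiv.swap x (γ x) * γ) = γ := by
      rw [← mul_assoc, Equiv.swap_mul_self, one_mul]
    have hαγ : (α * Equiv.swap x (γ x)) * (Equiv.swap x (γ x) * γ) = α * γ := by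
      rw [mul_assoc, hγeq]
    have hle : cc (Equiv.swap x (γ x) * γ) ≤ Fintype.card G :=
      cc_le_card (Equiv.swap x (γ x) * γ)
    have hk' : Fintype.card G - cc (Equiv.swap x (γ x) * γ) < k := by omega
    have IH := ih _ hk' (Equiv.swap x (γ x) * γ) (α * Equiv.swap x (γ x)) rfl
    rw [hαγ] at IH
    by_cases hc : α.SameCycle x (γ x)
    · have h1 : cc (α * Equiv.swap x (γ x)) = cc α + 1 := cc_mul_swap_split hxne hc
      refine ⟨by omega, fun heq => absurd heq (by omega)⟩
    · obtain ⟨h1, hcoarsen⟩ := cc_mul_swap_merge hxne hc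
      refine ⟨by omega, fun heq x' y' hxy' => ?_⟩
      have heq2 : cc (α * Equiv.swap x (γ x)) + cc (Equiv.swap x (γ x) * γ)
          = Fintype.card G + cc (α * γ) := by omega
      exact IH.2 heq2 x' y' (hcoarsen x' y' hxy')

lemma subtype_orb_val {α : Perm G} {C : Set G} (hC : ∀ y, y ∈ C ↔ α y ∈ C) (u : ↥C) :
    Subtype.val '' orb (α.subtypePerm (fun y => (hC y).symm)) u = orb α ↑u := by
  ext z
  constructor
  · rintro ⟨v, hv, rfl⟩
    exact mem_orb.2 (sameCycle_subtypePerm.1 (mem_orb.1 hv))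
  · intro hz
    have hzC : z ∈ C := (sameCycle_mem_iff hC (mem_orb.1 hz)).1 u.2
    exact ⟨⟨z, hzC⟩, mem_orb.2 (sameCycle_subtypePerm.2 (mem_orb.1 hz)), rfl⟩

lemma cc_restrict {α : Perm G} {C : Set G} (hC : ∀ y, y ∈ C ↔ α y ∈ C) :
    {O ∈ cyc α | O ⊆ C}.ncard = cc (α.subtypePerm (fun y => (hC y).symm)) := by
  have himg : (Subtype.val '' ·) '' cyc (α.subtypePerm (fun y => (hC y).symm)) = {O ∈ cyc α | O ⊆ C} := by
    ext O
    constructor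
    · rintro ⟨O', ⟨u, rfl⟩, rfl⟩
      show Subtype.val '' orb (α.subtypePerm (fun y => (hC y).symm)) u ∈ {O | O ∈ cyc α ∧ O ⊆ C}
      rw [subtype_orb_val hC u]
      exact ⟨orb_mem_cyc α ↑u, orb_subset_of_invariant hC u.2⟩
    · rintro ⟨⟨x, rfl⟩, hsub⟩
      have hxC : x ∈ C := hsub (self_mem_orb α x)
      exact ⟨orb (α.subtypePerm (fun y => (hC y).symm)) ⟨x, hxC⟩, orb_mem_cyc _ _, subtype_orb_val hC ⟨x, hxC⟩⟩
  rw [← himg, Set.ncard_image_of_injective _ (Set.image_injective.2 Subtype.val_injective)]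
  rfl

lemma cc_subtype_single {σ : Perm G} {w : G}
    (hC : ∀ y, y ∈ orb σ w ↔ σ y ∈ orb σ w) :
    cc (σ.subtypePerm (fun y => (hC y).symm)) = 1 := by
  haveI : Nonempty ↥(orb σ w) := ⟨⟨w, self_mem_orb σ w⟩⟩
  have hall : ∀ u : ↥(orb σ w), orb (σ.subtypePerm (fun y => (hC y).symm)) u = Set.univ := by
    intro u; ext v
    simp only [Set.mem_univ, iff_true]
    exact mem_orb.2 (sameCycle_subtypePerm.2 ((mem_orb.1 u.2).symm.trans (mem_orb.1 v.2)))
  have hc : cyc (σ.subtypePerm (fun y => (hC y).symm)) = {Set.univ} := by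
    rw [cyc]
    have hfe : orb (σ.subtypePerm (fun y => (hC y).symm)) = fun _ => Set.univ := funext hall
    rw [hfe, Set.range_const]
  rw [cc, hc, Set.ncard_singleton]

lemma subtypePerm_mul' (f g : Perm G) {p : G → Prop}
    (hf : ∀ x, p x ↔ p (f x)) (hg : ∀ x, p x ↔ p (g x))
    (hfg : ∀ x, p x ↔ p ((f * g) x)) :
    (f * g).subtypePerm (fun y => (hfg y).symm) = f.subtypePerm (fun y => (hf y).symm) * g.subtypePerm (fun y => (hg y).symm) := by
  ext v
  simp [Equiv.Perm.subtypePerm_apply, Equiv.Perm.mul_apply]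
  rfl

noncomputable def cycT (σ : Perm G) : Finset (Set G) := (cyc_finite σ).toFinset

lemma mem_cycT {σ : Perm G} {C : Set G} : C ∈ cycT σ ↔ C ∈ cyc σ :=
  Set.Finite.mem_toFinset _

lemma cycT_card (σ : Perm G) : (cycT σ).card = cc σ := by
  rw [cc, ncard_eq_card_toFinset _ (cyc_finite σ)]
  rfl

def gmap (σ : Perm G) (O : Set G) : Set G := {z | ∃ y ∈ O, σ.SameCycle y z}

lemma orb_subset_gmap (σ : Perm G) (O : Set G) : O ⊆ gmap σ O :=
  fun y hy => ⟨y, hy, SameCycle.refl σ y⟩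

lemma gmap_orb_eq {δ σ : Perm G} {x : G} {C : Set G} (hC : C ∈ cyc σ)
    (hsub : orb δ x ⊆ C) : gmap σ (orb δ x) = C := by
  obtain ⟨w, rfl⟩ := hC
  ext z
  constructor
  · rintro ⟨y, hy, hyz⟩
    exact mem_orb.2 ((mem_orb.1 (hsub hy)).trans hyz)
  · intro hz
    exact ⟨x, self_mem_orb δ x,
      (mem_orb.1 (hsub (self_mem_orb δ x))).symm.trans (mem_orb.1 hz)⟩

lemma cc_sum {δ σ : Perm G} (href : ∀ x, ∃ C ∈ cyc σ, orb δ x ⊆ C) :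
    cc δ = ∑ C ∈ cycT σ, {O ∈ cyc δ | O ⊆ C}.ncard := by
  classical
  have hP : cc δ = ((cyc_finite δ).toFinset).card :=
    ncard_eq_card_toFinset _ (cyc_finite δ)
  rw [hP, Finset.card_eq_sum_card_fiberwise (f := gmap σ) (t := cycT σ) ?hmem]
  case hmem =>
    intro O hO
    rw [Finset.mem_coe, Set.Finite.mem_toFinset] at hO
    obtain ⟨x, rfl⟩ := hO
    obtain ⟨C, hC, hsub⟩ := href x
    rw [gmap_orb_eq hC hsub]
    exact mem_cycT.2 hC
  refine Finset.sum_congr rfl fun C hC => ?_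
  rw [mem_cycT] at hC
  have hset : ↑(((cyc_finite δ).toFinset).filter (fun O => gmap σ O = C))
      = {O ∈ cyc δ | O ⊆ C} := by
    ext O
    simp only [Finset.coe_filter, Set.Finite.mem_toFinset, Set.mem_setOf_eq]
    constructor
    · rintro ⟨hOc, hg⟩
      exact ⟨hOc, hg ▸ orb_subset_gmap σ O⟩
    · rintro ⟨hOc, hsub⟩
      obtain ⟨x, rfl⟩ := hOc
      exact ⟨⟨x, rfl⟩, gmap_orb_eq hC hsub⟩
  rw [← hset, Set.ncard_coe_finset]

lemma sum_ncard_cyc (σ : Perm G) : ∑ C ∈ cycT σ, C.ncard = Fintype.card G := by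
  classical
  have step : ∀ C ∈ cycT σ, C.ncard
      = (Finset.univ.filter (fun z => orb σ z = C)).card := by
    intro C hC
    obtain ⟨w, rfl⟩ := mem_cycT.1 hC
    have hset : ↑(Finset.univ.filter (fun z => orb σ z = orb σ w)) = orb σ w := by
      ext z
      simp only [Finset.coe_filter, Finset.mem_univ, true_and, Set.mem_setOf_eq]
      rw [orb_eq_iff]
      exact ⟨fun h => mem_orb.2 h.symm, fun h => (mem_orb.1 h).symm⟩
    conv_lhs => rw [← hset]
    rw [Set.ncard_coe_finset]
  rw [Finset.sum_congr rfl step,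
    ← Finset.card_eq_sum_card_fiberwise (f := fun z => orb σ z) (t := cycT σ)
      (fun x _ => mem_cycT.2 (orb_mem_cyc σ x)), Finset.card_univ]

section Invs
variable {π σ : Perm G}

lemma hinv_pi (Href : ∀ x y, π.SameCycle x y → σ.SameCycle x y) (x : G) : ∀ y, y ∈ orb σ x ↔ π y ∈ orb σ x := by
  intro y
  have hy : σ.SameCycle y (π y) := Href y (π y) ⟨1, by simp⟩

  exact ⟨fun h => mem_orb.2 ((mem_orb.1 h).trans hy),
    fun h => mem_orb.2 ((mem_orb.1 h).trans hy.symm)⟩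

lemma hinv_sigma (x : G) : ∀ y, y ∈ orb σ x ↔ σ y ∈ orb σ x := by
  intro y
  have hy : σ.SameCycle y (σ y) := ⟨1, by simp⟩
  exact ⟨fun h => mem_orb.2 ((mem_orb.1 h).trans hy),
    fun h => mem_orb.2 ((mem_orb.1 h).trans hy.symm)⟩

lemma hinv_rho (Href : ∀ x y, π.SameCycle x y → σ.SameCycle x y) (x : G) : ∀ y, y ∈ orb σ x ↔ (π⁻¹ * σ) y ∈ orb σ x := by
  intro y
  constructor
  · intro h
    have h1 : σ y ∈ orb σ x := (hinv_sigma x y).1 h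
    have h2 := (hinv_pi Href x (π⁻¹ (σ y))).2 (by simpa using h1)
    simpa using h2
  · intro h
    have h1 : π ((π⁻¹ * σ) y) ∈ orb σ x := (hinv_pi Href x _).1 h
    have h2 : σ y ∈ orb σ x := by simpa using h1
    exact (hinv_sigma x y).2 h2

lemma href_pi (Href : ∀ x y, π.SameCycle x y → σ.SameCycle x y) : ∀ x, ∃ C ∈ cyc σ, orb π x ⊆ C :=
  fun x => ⟨orb σ x, orb_mem_cyc σ x, fun y hy => Href x y hy⟩

lemma href_rho (Href : ∀ x y, π.SameCycle x y → σ.SameCycle x y) : ∀ x, ∃ C ∈ cyc σ, orb (π⁻¹ * σ) x ⊆ C :=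
  fun x => ⟨orb σ x, orb_mem_cyc σ x,
    orb_subset_of_invariant (hinv_rho Href x) (self_mem_orb σ x)⟩

end Invs
end Main


lemma cycleCount_eq {N : ℕ} (π : Perm (Fin N)) : cycleCount π = cc π := by
  rw [cycleCount, cc, cyc]
  congr 1
  ext O
  simp only [Set.mem_setOf_eq, Set.mem_range]
  exact ⟨fun ⟨x, hx⟩ => ⟨x, hx.symm⟩, fun ⟨x, hx⟩ => ⟨x, hx.symm⟩⟩

lemma cyclesIn_eq {N : ℕ} (π : Perm (Fin N)) (C : Set (Fin N)) :
    cyclesIn π C = {O ∈ cyc π | O ⊆ C}.ncard := by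
  rw [cyclesIn]
  congr 1
  ext O
  simp only [Set.mem_setOf_eq, cyc, Set.mem_range]
  exact ⟨fun ⟨⟨x, hx⟩, hs⟩ => ⟨⟨x, hx.symm⟩, hs⟩, fun ⟨⟨x, hx⟩, hs⟩ => ⟨⟨x, hx.symm⟩, hs⟩⟩

end NCP

open NCP

theorem stmt_0 (n : ℕ) (hn : 1 ≤ n) (π σ : Equiv.Perm (Fin n)) :
    ((∀ x y : Fin n, π.SameCycle x y → σ.SameCycle x y) ∧
      ∀ x : Fin n,
        cyclesIn π {y | σ.SameCycle x y} + cyclesIn (π⁻¹ * σ) {y | σ.SameCycle x y} =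
          Set.ncard {y | σ.SameCycle x y} + 1) ↔
    cycleCount π + cycleCount (π⁻¹ * σ) = n + cycleCount σ := by
  classical
  have hN : Fintype.card (Fin n) = n := Fintype.card_fin n
  rw [cycleCount_eq, cycleCount_eq, cycleCount_eq]
  constructor
  · rintro ⟨Href, Hcyc⟩
    rw [cc_sum (href_pi Href), cc_sum (href_rho Href), ← Finset.sum_add_distrib]
    have hterm : ∀ C ∈ cycT σ,
        ({O ∈ cyc π | O ⊆ C}.ncard + {O ∈ cyc (π⁻¹ * σ) | O ⊆ C}.ncard)
          = C.ncard + 1 := by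
      intro C hC
      obtain ⟨w, rfl⟩ := mem_cycT.1 hC
      have h := Hcyc w
      rw [cyclesIn_eq, cyclesIn_eq] at h
      exact h
    rw [Finset.sum_congr rfl hterm, Finset.sum_add_distrib, sum_ncard_cyc σ,
      Finset.sum_const, smul_eq_mul, mul_one, cycT_card, hN]
  · intro Heq
    have htri := triangle_strong (Fintype.card (Fin n) - cc (π⁻¹ * σ)) (π⁻¹ * σ) π rfl
    have hms : π * (π⁻¹ * σ) = σ := by rw [← mul_assoc, mul_inv_cancel, one_mul]
    rw [hms] at htri
    have Heq' : cc π + cc (π⁻¹ * σ) = Fintype.card (Fin n) + cc σ := by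
      rw [hN]; exact Heq
    have Href : ∀ x y, π.SameCycle x y → σ.SameCycle x y := htri.2 Heq'
    refine ⟨Href, ?_⟩
    have hle : ∀ C ∈ cycT σ,
        ({O ∈ cyc π | O ⊆ C}.ncard + {O ∈ cyc (π⁻¹ * σ) | O ⊆ C}.ncard)
          ≤ C.ncard + 1 := by
      intro C hC
      obtain ⟨w, rfl⟩ := mem_cycT.1 hC
      haveI : Fintype ↥(orb σ w) := Fintype.ofFinite _
      have hpiw : ∀ y, y ∈ orb σ w ↔ π y ∈ orb σ w := hinv_pi Href w
      have hsigw : ∀ y, y ∈ orb σ w ↔ σ y ∈ orb σ w := hinv_sigma (σ := σ) w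
      have hrhow : ∀ y, y ∈ orb σ w ↔ (π⁻¹ * σ) y ∈ orb σ w := hinv_rho Href w
      have h1 := cc_restrict hpiw
      have h2 := cc_restrict hrhow
      have h3 := cc_subtype_single hsigw
      have hiinv : ∀ y, y ∈ orb σ w ↔ π⁻¹ y ∈ orb σ w := by
        intro y
        constructor
        · intro h
          exact (hpiw (π⁻¹ y)).2 (by simpa using h)
        · intro h
          have := (hpiw (π⁻¹ y)).1 h
          simpa using this
      have hmul : (π⁻¹ * σ).subtypePerm (fun y => (hrhow y).symm)
          = (π.subtypePerm (fun y => (hpiw y).symm))⁻¹ * σ.subtypePerm (fun y => (hsigw y).symm) := by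
        rw [subtypePerm_mul' π⁻¹ σ hiinv hsigw hrhow]
        congr 1
      have htri' := triangle_strong
        (Fintype.card ↥(orb σ w) - cc ((π⁻¹ * σ).subtypePerm (fun y => (hrhow y).symm)))
        ((π⁻¹ * σ).subtypePerm (fun y => (hrhow y).symm)) (π.subtypePerm (fun y => (hpiw y).symm)) rfl
      have hprod : π.subtypePerm (fun y => (hpiw y).symm) * (π⁻¹ * σ).subtypePerm (fun y => (hrhow y).symm)
          = σ.subtypePerm (fun y => (hsigw y).symm) := by
        rw [hmul, ← mul_assoc, mul_inv_cancel, one_mul]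
      rw [hprod] at htri'
      have hcard : Fintype.card ↥(orb σ w) = (orb σ w).ncard := by
        rw [← Nat.card_eq_fintype_card, Nat.card_coe_set_eq]
      have hmain : cc (π.subtypePerm (fun y => (hpiw y).symm)) + cc ((π⁻¹ * σ).subtypePerm (fun y => (hrhow y).symm))
          ≤ (orb σ w).ncard + 1 := by
        calc cc (π.subtypePerm (fun y => (hpiw y).symm)) + cc ((π⁻¹ * σ).subtypePerm (fun y => (hrhow y).symm))
            ≤ Fintype.card ↥(orb σ w) + cc (σ.subtypePerm (fun y => (hsigw y).symm)) := htri'.1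
          _ = (orb σ w).ncard + 1 := by rw [hcard, h3]
      rw [h1, h2]
      exact hmain
    have hsum_eq : ∑ C ∈ cycT σ,
          ({O ∈ cyc π | O ⊆ C}.ncard + {O ∈ cyc (π⁻¹ * σ) | O ⊆ C}.ncard)
        = ∑ C ∈ cycT σ, (C.ncard + 1) := by
      rw [Finset.sum_add_distrib, ← cc_sum (href_pi Href), ← cc_sum (href_rho Href),
        Finset.sum_add_distrib, sum_ncard_cyc σ, Finset.sum_const, smul_eq_mul,
        mul_one, cycT_card, hN]
      exact Heq
    have hall := (Finset.sum_eq_sum_iff_of_le hle).1 hsum_eq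
    intro x
    have hx := hall (orb σ x) (mem_cycT.2 (orb_mem_cyc σ x))
    rw [cyclesIn_eq, cyclesIn_eq]
    exact hx
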